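/- Let q > 0 and φ(x) = cos²(πx/q) for |x| < q/2, extended by 0. Then for all |x| ≤ q: (φ*φ)(x) ≤ 3q/8 − (5/4)·x²/q whenever |x| < q/2, and for a ∈ (1/2, 1], with m = ((φ*φ)(aq) − (φ*φ)(q/2))/(aq − q/2), one has (φ*φ)(x) ≤ q/16 + (|x| − q/2)·m whenever q/2 ≤ |x| ≤ aq. -/

import Mathlib

open MeasureTheory Real

set_option maxHeartbeats 1000000

/-- The Hann window of width `q`. -/
noncomputable def hann (q x : ℝ) : ℝ := if |x| < q / 2 then Real.cos (Real.pi * x / q) ^ 2 else 0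

/-- Autoconvolution of the Hann window over `ℝ`. -/
noncomputable def hconv (q x : ℝ) : ℝ := ∫ y : ℝ, hann q y * hann q (x - y)


/-- helper: nonneg on Ici 0 from derivative -/
lemma aux_nonneg_of_deriv (f f' : ℝ → ℝ) (h0 : f 0 = 0)
    (hd : ∀ x, HasDerivAt f (f' x) x) (hp : ∀ x, 0 ≤ x → 0 ≤ f' x) :
    ∀ x, 0 ≤ x → 0 ≤ f x := by
  have hmono : MonotoneOn f (Set.Ici (0:ℝ)) := by
    apply monotoneOn_of_deriv_nonneg (convex_Ici 0)
    · exact (continuous_iff_continuousAt.2 fun x => (hd x).differentiableAt.continuousAt).continuousOn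
    · exact fun x _ => (hd x).differentiableAt.differentiableWithinAt
    · intro x hx
      rw [(hd x).deriv]
      exact hp x (le_of_lt (by simpa [interior_Ici] using hx))
  intro x hx
  calc (0:ℝ) = f 0 := h0.symm
    _ ≤ f x := hmono (Set.self_mem_Ici) hx hx

lemma aux_sin_lb {x : ℝ} (hx : 0 ≤ x) : x - x^3/6 ≤ Real.sin x := by
  have := aux_nonneg_of_deriv (fun x => Real.sin x - (x - x^3/6))
    (fun x => Real.cos x - (1 - x^2/2)) (by simp)
    (fun x => by
      have h1 := Real.hasDerivAt_sin x
      have h2 : HasDerivAt (fun x : ℝ => x - x^3/6) (1 - 3*x^2/6) x := by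
        refine ((hasDerivAt_id' x).sub (((hasDerivAt_pow 3 x)).div_const 6)).congr_deriv ?_; norm_num
      have := h1.sub h2
      refine this.congr_deriv ?_
      ring)
    (fun x _ => by simpa using Real.one_sub_sq_div_two_le_cos (x := x)) x hx
  linarith

lemma aux_cos_ub {x : ℝ} (hx : 0 ≤ x) : Real.cos x ≤ 1 - x^2/2 + x^4/24 := by
  have := aux_nonneg_of_deriv (fun x => 1 - x^2/2 + x^4/24 - Real.cos x)
    (fun x => -x + x^3/6 + Real.sin x) (by norm_num)
    (fun x => by
      have h2 : HasDerivAt (fun x : ℝ => 1 - x^2/2 + x^4/24 - Real.cos x)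
          (-(2*x^1)/2 + 4*x^3/24 - (-Real.sin x)) x := by
        have := (((hasDerivAt_const x (1:ℝ)).sub ((hasDerivAt_pow 2 x).div_const 2)).add
          ((hasDerivAt_pow 4 x).div_const 24)).sub (Real.hasDerivAt_cos x)
        refine this.congr_deriv ?_
        push_cast
        ring
      convert h2 using 1
      push_cast
      ring)
    (fun x hx => by nlinarith [aux_sin_lb hx]) x hx
  linarith

lemma aux_sin_ub {x : ℝ} (hx : 0 ≤ x) : Real.sin x ≤ x - x^3/6 + x^5/120 := by
  have := aux_nonneg_of_deriv (fun x => x - x^3/6 + x^5/120 - Real.sin x)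
    (fun x => 1 - x^2/2 + x^4/24 - Real.cos x) (by norm_num)
    (fun x => by
      have h2 : HasDerivAt (fun x : ℝ => x - x^3/6 + x^5/120 - Real.sin x)
          (1 - 3*x^2/6 + 5*x^4/120 - Real.cos x) x := by
        exact (((hasDerivAt_id x).sub ((hasDerivAt_pow 3 x).div_const 6)).add
          ((hasDerivAt_pow 5 x).div_const 120)).sub (Real.hasDerivAt_sin x)
      convert h2 using 1
      push_cast
      ring)
    (fun x hx => by nlinarith [aux_cos_ub hx]) x hx
  linarith

lemma aux_theta_cos_le_sin {θ : ℝ} (h0 : 0 ≤ θ) (h1 : θ ≤ π) : θ * Real.cos θ ≤ Real.sin θ := by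
  have hmono : MonotoneOn (fun θ => Real.sin θ - θ * Real.cos θ) (Set.Icc 0 π) := by
    apply monotoneOn_of_deriv_nonneg (convex_Icc 0 π)
    · exact (Continuous.continuousOn (by continuity))
    · intro x _
      exact ((Real.hasDerivAt_sin x).sub
        ((hasDerivAt_id x).mul (Real.hasDerivAt_cos x))).differentiableAt.differentiableWithinAt
    · intro x hx
      rw [interior_Icc] at hx
      have hd : HasDerivAt (fun θ => Real.sin θ - θ * Real.cos θ) (x * Real.sin x) x := by
        have := (Real.hasDerivAt_sin x).sub ((hasDerivAt_id x).mul (Real.hasDerivAt_cos x))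
        refine this.congr_deriv ?_
        simp only [id_eq]
        ring
      rw [hd.deriv]
      exact mul_nonneg hx.1.le (Real.sin_nonneg_of_nonneg_of_le_pi hx.1.le hx.2.le)
  have := hmono (Set.left_mem_Icc.2 Real.pi_pos.le) (Set.mem_Icc.2 ⟨h0, h1⟩) h0
  simpa using this

lemma part1_scaled {u : ℝ} (h0 : 0 ≤ u) (h1 : u ≤ 1/2) :
    (1-u)/4 * (1 + Real.cos (2*π*u)/2) + 3/(16*π) * Real.sin (2*π*u) ≤ 3/8 - 5/4*u^2 := by
  have hπ := Real.pi_pos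
  have hπ1 := Real.pi_gt_d6
  have hπ2 := Real.pi_lt_d2
  have hp2l : (9.8696:ℝ) < π^2 := by nlinarith
  have hp2u : π^2 ≤ (9.9225:ℝ) := by nlinarith
  have hp4u : π^4 ≤ (98.5:ℝ) := by nlinarith
  have hp4p : (0:ℝ) < π^4 := by positivity
  rcases le_or_gt u (3/10) with hu | hu
  · -- Taylor at 0
    have hs0 : (0:ℝ) ≤ 2*π*u := by positivity
    have hc := aux_cos_ub hs0
    have hs := aux_sin_ub hs0
    have e1 : (1-u)/4 * (1 + (1 - (2*π*u)^2/2 + (2*π*u)^4/24)/2)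
        = (1-u)/4 + (1-u)/8 - (1-u)*π^2*u^2/4 + (1-u)*π^4*u^4/12 := by ring
    have e2 : 3/(16*π) * ((2*π*u) - (2*π*u)^3/6 + (2*π*u)^5/120)
        = 3*u/8 - π^2*u^3/4 + π^4*u^5/20 := by
      field_simp
      ring
    have hu2 : u^2 ≤ 9/100 := by nlinarith
    have hstep : π^4*u^2/12 - π^4*u^3/30 ≤ π^2/4 - 5/4 := by
      have hA : π^4*u^2 ≤ 98.5*(9/100) := by
        calc π^4*u^2 ≤ 98.5*u^2 := mul_le_mul_of_nonneg_right hp4u (sq_nonneg u)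
          _ ≤ 98.5*(9/100) := by nlinarith
      have hB : 0 ≤ π^4*u^3 := by positivity
      nlinarith
    have key : (1-u)/4 + (1-u)/8 - (1-u)*π^2*u^2/4 + (1-u)*π^4*u^4/12
        + (3*u/8 - π^2*u^3/4 + π^4*u^5/20) ≤ 3/8 - 5/4*u^2 := by
      nlinarith [mul_le_mul_of_nonneg_left hstep (sq_nonneg u)]
    have hcoef : (0:ℝ) ≤ (1-u)/8 := by linarith
    have hcoef2 : (0:ℝ) < 3/(16*π) := by positivity
    calc (1-u)/4 * (1 + Real.cos (2*π*u)/2) + 3/(16*π) * Real.sin (2*π*u)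
        ≤ (1-u)/4 * (1 + (1 - (2*π*u)^2/2 + (2*π*u)^4/24)/2)
          + 3/(16*π) * ((2*π*u) - (2*π*u)^3/6 + (2*π*u)^5/120) := by
          have t1 : (1-u)/4 * (1 + Real.cos (2*π*u)/2)
              ≤ (1-u)/4 * (1 + (1 - (2*π*u)^2/2 + (2*π*u)^4/24)/2) := by
            have h' : 1 + Real.cos (2*π*u)/2 ≤ 1 + (1 - (2*π*u)^2/2 + (2*π*u)^4/24)/2 := by
              linarith
            exact mul_le_mul_of_nonneg_left h' (by linarith)
          have t2 : 3/(16*π) * Real.sin (2*π*u)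
              ≤ 3/(16*π) * ((2*π*u) - (2*π*u)^3/6 + (2*π*u)^5/120) :=
            mul_le_mul_of_nonneg_left hs hcoef2.le
          linarith
      _ = (1-u)/4 + (1-u)/8 - (1-u)*π^2*u^2/4 + (1-u)*π^4*u^4/12
          + (3*u/8 - π^2*u^3/4 + π^4*u^5/20) := by rw [e1, e2]
      _ ≤ 3/8 - 5/4*u^2 := key
  · -- Taylor at 1/2 : v = 1/2 - u
    obtain ⟨v, hv⟩ : ∃ v : ℝ, v = 1/2 - u := ⟨_, rfl⟩
    have hv0 : 0 ≤ v := by rw [hv]; linarith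
    have hv1 : v ≤ 1/5 := by rw [hv]; linarith
    have hv2 : v^2 ≤ 1/25 := by nlinarith
    have hsv : (0:ℝ) ≤ 2*π*v := by positivity
    have harg : 2*π*u = π - 2*π*v := by rw [hv]; ring
    rw [harg, Real.cos_pi_sub, Real.sin_pi_sub]
    have hc : 1 - (2*π*v)^2/2 ≤ Real.cos (2*π*v) := Real.one_sub_sq_div_two_le_cos
    have ec : (2*π*v)^2/2 = 2*π^2*v^2 := by ring
    rw [ec] at hc
    have hs : Real.sin (2*π*v) ≤ 2*π*v := Real.sin_le hsv
    have hcoef2 : (0:ℝ) < 3/(16*π) := by positivity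
    have t2 : 3/(16*π) * Real.sin (2*π*v) ≤ 3*v/8 := by
      calc 3/(16*π) * Real.sin (2*π*v) ≤ 3/(16*π) * (2*π*v) :=
            mul_le_mul_of_nonneg_left hs hcoef2.le
        _ = 3*v/8 := by field_simp; ring
    have t1 : (1-u)/4 * (1 + -Real.cos (2*π*v)/2)
        ≤ (1-u)/4 * (1/2 + π^2*v^2) := by
      have hcoef : (0:ℝ) ≤ (1-u)/4 := by linarith
      have h' : 1 + -Real.cos (2*π*v)/2 ≤ 1/2 + π^2*v^2 := by linarith
      exact mul_le_mul_of_nonneg_left h' hcoef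
    have hC : π^2*v ≤ 9.9225/5 := by
      calc π^2*v ≤ 9.9225*v := mul_le_mul_of_nonneg_right hp2u hv0
        _ ≤ 9.9225/5 := by linarith
    have hA : π^2*v^2 ≤ 9.9225/25 := by
      calc π^2*v^2 ≤ 9.9225*v^2 := mul_le_mul_of_nonneg_right hp2u (sq_nonneg v)
        _ ≤ 9.9225/25 := by nlinarith
    have hS : 5*v/4 + π^2*v/8 + π^2*v^2/4 ≤ 3/4 := by linarith
    have key : (1-u)/4 * (1/2 + π^2*v^2) + 3*v/8 ≤ 3/8 - 5/4*u^2 := by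
      have hu' : u = 1/2 - v := by rw [hv]; ring
      rw [hu']
      nlinarith [mul_le_mul_of_nonneg_left hS hv0]
    linarith

lemma cossq_identity (A B : ℝ) :
    1/4 + Real.cos (2*A)/4 + Real.cos (2*B)/4 + Real.cos (2*A+2*B)/8 + Real.cos (2*A-2*B)/8
      = Real.cos A^2 * Real.cos B^2 := by
  rw [Real.cos_add, Real.cos_sub, Real.cos_two_mul, Real.cos_two_mul]
  ring

lemma hconv_eq (q : ℝ) (hq : 0 < q) (x : ℝ) (hx0 : 0 ≤ x) (hx1 : x ≤ q) :
    hconv q x = (q - x)/4 * (1 + Real.cos (2*π*x/q)/2) + 3*q/(16*π) * Real.sin (2*π*x/q) := by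
  have hπ := Real.pi_pos
  have hq' : q ≠ 0 := ne_of_gt hq
  have hπ' : π ≠ 0 := ne_of_gt hπ
  -- Step 1: integrand as indicator
  have hind : (fun y => hann q y * hann q (x - y)) =
      Set.indicator (Set.Ioo (x - q/2) (q/2))
        (fun y => Real.cos (π*y/q)^2 * Real.cos (π*(x-y)/q)^2) := by
    funext y
    rcases lt_or_ge |y| (q/2) with h1 | h1
    · rcases lt_or_ge |x - y| (q/2) with h2 | h2
      · have hy : y ∈ Set.Ioo (x - q/2) (q/2) := by
          constructor
          · linarith [(abs_lt.1 h2).2]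
          · exact (abs_lt.1 h1).2
        rw [Set.indicator_of_mem hy]
        simp [hann, h1, h2]
      · have hy : y ∉ Set.Ioo (x - q/2) (q/2) := by
          intro hy
          have : |x - y| < q/2 := abs_lt.2 ⟨by linarith [hy.2], by linarith [hy.1]⟩
          linarith
        rw [Set.indicator_of_notMem hy]
        simp [hann, not_lt.2 h2]
    · have hy : y ∉ Set.Ioo (x - q/2) (q/2) := by
        intro hy
        have : |y| < q/2 := abs_lt.2 ⟨by linarith [hy.1], hy.2⟩
        linarith
      rw [Set.indicator_of_notMem hy]
      simp [hann, not_lt.2 h1]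
  -- Step 2: to interval integral
  have hle : x - q/2 ≤ q/2 := by linarith
  have step2 : hconv q x = ∫ y in (x - q/2)..(q/2),
      Real.cos (π*y/q)^2 * Real.cos (π*(x-y)/q)^2 := by
    rw [hconv, hind, MeasureTheory.integral_indicator measurableSet_Ioo,
      intervalIntegral.integral_of_le hle, MeasureTheory.integral_Ioc_eq_integral_Ioo]
  -- Step 3: FTC with explicit antiderivative
  set G : ℝ → ℝ := fun y => y/4 + Real.cos (2*π*x/q)/8 * y + q/(8*π) * Real.sin (2*π*y/q)
      - q/(8*π) * Real.sin (2*π*(x-y)/q) + q/(32*π) * Real.sin (2*π*(2*y-x)/q) with hG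
  have key : ∀ y : ℝ, HasDerivAt G (Real.cos (π*y/q)^2 * Real.cos (π*(x-y)/q)^2) y := by
    intro y
    have l1 : HasDerivAt (fun y : ℝ => 2*π*y/q) (2*π*1/q) y :=
      ((hasDerivAt_id y).const_mul (2*π)).div_const q
    have l2 : HasDerivAt (fun y : ℝ => 2*π*(x-y)/q) (2*π*(-1)/q) y := by
      have h := (((hasDerivAt_id y).const_sub x).const_mul (2*π)).div_const q
      simpa using h
    have l3 : HasDerivAt (fun y : ℝ => 2*π*(2*y-x)/q) (2*π*(2*1)/q) y := by
      have h := ((((hasDerivAt_id y).const_mul 2).sub_const x).const_mul (2*π)).div_const q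
      simpa using h
    have p1 : HasDerivAt (fun y : ℝ => y/4) (1/4) y := by
      simpa using (hasDerivAt_id y).div_const 4
    have p2 : HasDerivAt (fun y : ℝ => Real.cos (2*π*x/q)/8 * y) (Real.cos (2*π*x/q)/8 * 1) y :=
      (hasDerivAt_id y).const_mul _
    have p3 : HasDerivAt (fun y : ℝ => q/(8*π) * Real.sin (2*π*y/q))
        (q/(8*π) * (Real.cos (2*π*y/q) * (2*π*1/q))) y :=
      ((Real.hasDerivAt_sin _).comp y l1).const_mul _
    have p4 : HasDerivAt (fun y : ℝ => q/(8*π) * Real.sin (2*π*(x-y)/q))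
        (q/(8*π) * (Real.cos (2*π*(x-y)/q) * (2*π*(-1)/q))) y :=
      ((Real.hasDerivAt_sin _).comp y l2).const_mul _
    have p5 : HasDerivAt (fun y : ℝ => q/(32*π) * Real.sin (2*π*(2*y-x)/q))
        (q/(32*π) * (Real.cos (2*π*(2*y-x)/q) * (2*π*(2*1)/q))) y :=
      ((Real.hasDerivAt_sin _).comp y l3).const_mul _
    have hsum := ((((p1.add p2).add p3).sub p4).add p5)
    rw [hG]
    refine hsum.congr_deriv ?_
    have e1 : 2*π*y/q = 2*(π*y/q) := by ring
    have e2 : 2*π*(x-y)/q = 2*(π*(x-y)/q) := by ring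
    have e3 : 2*π*x/q = 2*(π*y/q) + 2*(π*(x-y)/q) := by field_simp; ring
    have e4 : 2*π*(2*y-x)/q = 2*(π*y/q) - 2*(π*(x-y)/q) := by field_simp; ring
    rw [e1, e2, e3, e4, ← cossq_identity (π*y/q) (π*(x-y)/q)]
    field_simp
    ring
  have hcont : Continuous fun y => Real.cos (π*y/q)^2 * Real.cos (π*(x-y)/q)^2 := by
    continuity
  have step3 : hconv q x = G (q/2) - G (x - q/2) := by
    rw [step2]
    exact intervalIntegral.integral_eq_sub_of_hasDerivAt (fun y _ => key y)
      (hcont.intervalIntegrable _ _)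
  -- Step 4: evaluate endpoints
  have e1 : Real.sin (2*π*(q/2)/q) = 0 := by
    rw [show 2*π*(q/2)/q = π by field_simp]
    exact Real.sin_pi
  have e2 : Real.sin (2*π*(x-q/2)/q) = -Real.sin (2*π*x/q) := by
    rw [show 2*π*(x-q/2)/q = 2*π*x/q - π by field_simp, Real.sin_sub_pi]
  have e3 : Real.sin (2*π*(2*(q/2)-x)/q) = -Real.sin (2*π*x/q) := by
    rw [show 2*π*(2*(q/2)-x)/q = -(2*π*x/q) + 2*π by field_simp; ring,
      Real.sin_add_two_pi, Real.sin_neg]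
  have e4 : Real.sin (2*π*(2*(x-q/2)-x)/q) = Real.sin (2*π*x/q) := by
    rw [show 2*π*(2*(x-q/2)-x)/q = 2*π*x/q - 2*π by field_simp; ring, Real.sin_sub_two_pi]
  have e5 : Real.sin (2*π*(x-(x-q/2))/q) = 0 := by
    rw [show 2*π*(x-(x-q/2))/q = π by field_simp; ring]
    exact Real.sin_pi
  rw [step3, hG]
  simp only []
  rw [e1, e2, e3, e4, e5]
  field_simp
  ring

noncomputable def Fc (q x : ℝ) : ℝ :=
  (q - x)/4 * (1 + Real.cos (2*Real.pi*x/q)/2) + 3*q/(16*Real.pi) * Real.sin (2*Real.pi*x/q)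

noncomputable def Fc1 (q x : ℝ) : ℝ :=
  -1/4 + Real.cos (2*Real.pi*x/q)/4 - Real.pi*(q-x)*Real.sin (2*Real.pi*x/q)/(4*q)

noncomputable def Fc2 (q x : ℝ) : ℝ :=
  -Real.pi*Real.sin (2*Real.pi*x/q)/(4*q) - Real.pi^2*(q-x)*Real.cos (2*Real.pi*x/q)/(2*q^2)

lemma hasDerivAt_lin (q x : ℝ) : HasDerivAt (fun x : ℝ => 2*π*x/q) (2*π*1/q) x :=
  ((hasDerivAt_id x).const_mul (2*π)).div_const q

lemma hasDerivAt_Fc (q : ℝ) (hq : 0 < q) (x : ℝ) : HasDerivAt (Fc q) (Fc1 q x) x := by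
  have hπ := Real.pi_pos
  have hc : HasDerivAt (fun x : ℝ => Real.cos (2*π*x/q)) (-Real.sin (2*π*x/q) * (2*π*1/q)) x :=
    (Real.hasDerivAt_cos _).comp x (hasDerivAt_lin q x)
  have hs : HasDerivAt (fun x : ℝ => Real.sin (2*π*x/q)) (Real.cos (2*π*x/q) * (2*π*1/q)) x :=
    (Real.hasDerivAt_sin _).comp x (hasDerivAt_lin q x)
  have p1 : HasDerivAt (fun x : ℝ => (q - x)/4) (-1/4) x := by
    simpa using ((hasDerivAt_id x).const_sub q).div_const 4
  have p2 : HasDerivAt (fun x : ℝ => 1 + Real.cos (2*π*x/q)/2)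
      (-Real.sin (2*π*x/q) * (2*π*1/q)/2) x := by
    exact (hc.div_const 2).const_add 1
  have hmul := p1.mul p2
  have hfin := hmul.add (hs.const_mul (3*q/(16*π)))
  have : Fc q = fun x => (q - x)/4 * (1 + Real.cos (2*π*x/q)/2) + 3*q/(16*π) * Real.sin (2*π*x/q) := rfl
  rw [this]
  refine hfin.congr_deriv ?_
  unfold Fc1
  field_simp
  ring

lemma hasDerivAt_Fc1 (q : ℝ) (hq : 0 < q) (x : ℝ) : HasDerivAt (Fc1 q) (Fc2 q x) x := by
  have hπ := Real.pi_pos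
  have hc : HasDerivAt (fun x : ℝ => Real.cos (2*π*x/q)) (-Real.sin (2*π*x/q) * (2*π*1/q)) x :=
    (Real.hasDerivAt_cos _).comp x (hasDerivAt_lin q x)
  have hs : HasDerivAt (fun x : ℝ => Real.sin (2*π*x/q)) (Real.cos (2*π*x/q) * (2*π*1/q)) x :=
    (Real.hasDerivAt_sin _).comp x (hasDerivAt_lin q x)
  have p1 : HasDerivAt (fun x : ℝ => π*(q-x)) (π*(-1)) x := by
    simpa using ((hasDerivAt_id x).const_sub q).const_mul π
  have hmul := (p1.mul hs).div_const (4*q)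
  have hfin := ((hasDerivAt_const x (-1/4:ℝ)).add (hc.div_const 4)).sub hmul
  have : Fc1 q = fun x => -1/4 + Real.cos (2*π*x/q)/4 - π*(q-x)*Real.sin (2*π*x/q)/(4*q) := rfl
  rw [this]
  refine hfin.congr_deriv ?_
  unfold Fc2
  field_simp
  ring

lemma Fc2_nonneg (q : ℝ) (hq : 0 < q) {x : ℝ} (h1 : q/2 ≤ x) (h2 : x ≤ q) : 0 ≤ Fc2 q x := by
  have hπ := Real.pi_pos
  obtain ⟨θ, hθdef⟩ : ∃ θ : ℝ, θ = 2*π*(q-x)/q := ⟨_, rfl⟩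
  have hθ0 : 0 ≤ θ := by
    rw [hθdef]
    have : 0 ≤ q - x := by linarith
    positivity
  have hθπ : θ ≤ π := by
    rw [hθdef]
    rw [div_le_iff₀ hq]
    nlinarith
  have harg : 2*π*x/q = -θ + 2*π := by rw [hθdef]; field_simp; ring
  have es : Real.sin (2*π*x/q) = -Real.sin θ := by
    rw [harg, Real.sin_add_two_pi, Real.sin_neg]
  have ec : Real.cos (2*π*x/q) = Real.cos θ := by
    rw [harg, Real.cos_add_two_pi, Real.cos_neg]
  have hkey := aux_theta_cos_le_sin hθ0 hθπ
  have hpos : (0:ℝ) < π/(4*q) := by positivity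
  have h := mul_le_mul_of_nonneg_left hkey hpos.le
  have e : π/(4*q)*(θ*Real.cos θ) = π^2*(q-x)*Real.cos θ/(2*q^2) := by
    rw [hθdef]; field_simp; ring
  unfold Fc2
  rw [es, ec]
  rw [e] at h
  have : -π*(-Real.sin θ)/(4*q) = π/(4*q)*Real.sin θ := by field_simp
  linarith [h, this.ge]

lemma Fc_convex (q : ℝ) (hq : 0 < q) : ConvexOn ℝ (Set.Icc (q/2) q) (Fc q) := by
  have hderiv : deriv (Fc q) = Fc1 q := by
    funext x; exact (hasDerivAt_Fc q hq x).deriv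
  apply convexOn_of_deriv2_nonneg (convex_Icc _ _)
  · exact Continuous.continuousOn (continuous_iff_continuousAt.2 fun x =>
      (hasDerivAt_Fc q hq x).differentiableAt.continuousAt)
  · exact fun x _ => (hasDerivAt_Fc q hq x).differentiableAt.differentiableWithinAt
  · rw [hderiv]
    exact fun x _ => (hasDerivAt_Fc1 q hq x).differentiableAt.differentiableWithinAt
  · intro x hx
    rw [interior_Icc] at hx
    have : deriv^[2] (Fc q) x = deriv (deriv (Fc q)) x := by
      simp [Function.iterate_succ, Function.iterate_zero]
    rw [this, hderiv, (hasDerivAt_Fc1 q hq x).deriv]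
    exact Fc2_nonneg q hq hx.1.le hx.2.le

lemma convexOn_chord {f : ℝ → ℝ} {A B x : ℝ} (hf : ConvexOn ℝ (Set.Icc A B) f)
    (hAB : A < B) (hx1 : A ≤ x) (hx2 : x ≤ B) :
    f x ≤ f A + (x - A) * ((f B - f A)/(B - A)) := by
  have hBA : (0:ℝ) < B - A := by linarith
  obtain ⟨μ, hμdef⟩ : ∃ μ : ℝ, μ = (B - x)/(B - A) := ⟨_, rfl⟩
  obtain ⟨ν, hνdef⟩ : ∃ ν : ℝ, ν = (x - A)/(B - A) := ⟨_, rfl⟩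
  have hμ : 0 ≤ μ := by rw [hμdef]; apply div_nonneg <;> linarith
  have hν : 0 ≤ ν := by rw [hνdef]; apply div_nonneg <;> linarith
  have hsum : μ + ν = 1 := by rw [hμdef, hνdef]; field_simp; ring
  have h := hf.2 (Set.left_mem_Icc.2 hAB.le) (Set.right_mem_Icc.2 hAB.le) hμ hν hsum
  simp only [smul_eq_mul] at h
  have hp : μ * A + ν * B = x := by rw [hμdef, hνdef]; field_simp; ring
  rw [hp] at h
  calc f x ≤ μ * f A + ν * f B := h
    _ = f A + (x - A) * ((f B - f A)/(B - A)) := by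
        rw [hμdef, hνdef]; field_simp; ring

lemma hann_neg (q t : ℝ) : hann q (-t) = hann q t := by
  unfold hann
  rw [abs_neg, show π * -t / q = -(π * t / q) by ring, Real.cos_neg]

lemma hconv_abs (q x : ℝ) : hconv q x = hconv q |x| := by
  rcases abs_choice x with h | h
  · rw [h]
  · rw [h]
    unfold hconv
    rw [← integral_neg_eq_self (fun y => hann q y * hann q (-x - y))]
    congr 1
    funext y
    rw [hann_neg, show -x - -y = -(x - y) by ring, hann_neg]

theorem hann_autoconv_upper_bounds (q : ℝ) (hq : 0 < q) :
    (∀ x : ℝ, |x| < q / 2 → hconv q x ≤ 3 * q / 8 - 5 / 4 * x ^ 2 / q) ∧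
    (∀ a : ℝ, a ∈ Set.Ioc (1 / 2 : ℝ) 1 → ∀ x : ℝ, q / 2 ≤ |x| → |x| ≤ a * q →
      hconv q x ≤ q / 16 +
        (|x| - q / 2) * ((hconv q (a * q) - hconv q (q / 2)) / (a * q - q / 2))) := by
  have hπ := Real.pi_pos
  have hq' : q ≠ 0 := ne_of_gt hq
  have hπ' : π ≠ 0 := ne_of_gt hπ
  have hFc : ∀ x : ℝ, 0 ≤ x → x ≤ q → hconv q x = Fc q x := by
    intro x h0 h1
    rw [hconv_eq q hq x h0 h1]; rfl
  have hFcq2 : Fc q (q/2) = q/16 := by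
    unfold Fc
    rw [show 2*π*(q/2)/q = π by field_simp, Real.cos_pi, Real.sin_pi]
    ring
  constructor
  · intro x hx
    have habs0 : (0:ℝ) ≤ |x| := abs_nonneg x
    have habsq : |x| ≤ q := by linarith
    rw [hconv_abs, hFc _ habs0 habsq]
    have h1' : |x|/q ≤ 1/2 := by rw [div_le_iff₀ hq]; linarith
    have h0' : 0 ≤ |x|/q := by positivity
    have hsc := part1_scaled h0' h1'
    have hmul := mul_le_mul_of_nonneg_left hsc hq.le
    have eL : q * ((1-|x|/q)/4 * (1 + Real.cos (2*π*(|x|/q))/2)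
        + 3/(16*π) * Real.sin (2*π*(|x|/q))) = Fc q |x| := by
      rw [show 2*π*(|x|/q) = 2*π*|x|/q by ring]
      unfold Fc
      field_simp
    have eR : q * (3/8 - 5/4*(|x|/q)^2) = 3*q/8 - 5/4*x^2/q := by
      rw [show (|x|/q)^2 = |x|^2/q^2 by ring, sq_abs]
      field_simp
    rw [eL, eR] at hmul
    linarith
  · intro a ha x hx1 hx2
    obtain ⟨ha1, ha2⟩ := ha
    have hBq : a * q ≤ q := by nlinarith
    have hAB : q/2 < a*q := by nlinarith
    have habs0 : (0:ℝ) ≤ |x| := abs_nonneg x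
    have habsq : |x| ≤ q := le_trans hx2 hBq
    rw [hconv_abs, hFc _ habs0 habsq, hFc (a*q) (by positivity) hBq,
      hFc (q/2) (by positivity) (by linarith), hFcq2]
    have hconv' := ((Fc_convex q hq).subset (Set.Icc_subset_Icc_right hBq)
      (convex_Icc _ _))
    have := convexOn_chord hconv' hAB hx1 hx2
    rw [hFcq2] at this
    exact this
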